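/- Let M be a conditional oriented matroid on I and let B, B' be two basic sets for the same flat F ∈ L(M). Then the difference ∏_{b∈B} z_b − ∏_{b'∈B'} z_{b'} lies in the vanishing ideal I(Z_M) of the big locus, and being homogeneous (since #B = #B'), it lies in gr I(Z_M). -/

import Mathlib

/-- The composition `X ∘ Y` of signed subsets of `I`. -/
def scomp {I : Type*} (X Y : I → SignType) : I → SignType :=
  fun i => if X i ≠ 0 then X i else Y i

/-- The separating set of two signed subsets. -/
def sepSet {I : Type*} (X Y : I → SignType) : Set I :=
  {i | X i = -(Y i) ∧ X i ≠ 0}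

/-- A conditional oriented matroid on the ground set `I`. -/
structure IsCOM {I : Type*} (M : Set (I → SignType)) : Prop where
  faceSym : ∀ X ∈ M, ∀ Y ∈ M, scomp X (-Y) ∈ M
  strongElim : ∀ X ∈ M, ∀ Y ∈ M, ∀ i ∈ sepSet X Y,
    ∃ Z ∈ M, Z i = 0 ∧ ∀ j ∉ sepSet X Y, Z j = scomp X Y j

/-- The flat (zero set) of a covector. -/
def sflat {I : Type*} (X : I → SignType) : Set I := {i | X i = 0}

/-- The collection of flats of a conditional oriented matroid. -/
def flats {I : Type*} (M : Set (I → SignType)) : Set (Set I) :=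
  {F | ∃ X ∈ M, sflat X = F}

/-- `F` is the minimal flat of `M` containing `C` (the closure `C̄` of `C`). -/
def minimalFlatOf {I : Type*} (M : Set (I → SignType)) (C F : Set I) : Prop :=
  F ∈ flats M ∧ C ⊆ F ∧ ∀ F' ∈ flats M, C ⊆ F' → F ⊆ F'

/-- `B` is basic for the flat `F`: the closure of `B` is `F` and no proper
subset of `B` has closure `F`. -/
def IsBasic {I : Type*} (M : Set (I → SignType)) (B : Finset I) (F : Set I) : Prop :=
  minimalFlatOf M (B : Set I) F ∧
    ∀ B' ⊆ B, minimalFlatOf M (B' : Set I) F → B' = B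

/-- The 0/1 point `z_X ∈ K^{I × {+,-,0}}` attached to a covector `X`. -/
def bigPoint (K : Type*) [Field K] {I : Type*} (X : I → SignType) :
    I × SignType → K :=
  fun p => if X p.1 = p.2 then 1 else 0

/-- The big locus `Z_M ⊆ K^{I × {+,-,0}}` of a conditional oriented matroid. -/
def bigLocus (K : Type*) [Field K] {I : Type*} (M : Set (I → SignType)) :
    Set (I × SignType → K) :=
  (fun X => bigPoint K X) '' M

/-- The vanishing ideal of a set of points of `K^σ`. -/
noncomputable def vanishingIdeal (K : Type*) [Field K] {σ : Type*} (Z : Set (σ → K)) :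
    Ideal (MvPolynomial σ K) :=
  ⨅ z ∈ Z, RingHom.ker (MvPolynomial.eval z)

/-- The associated graded ideal `gr I(Z)`, generated by the top-degree
homogeneous components of the nonzero elements of `I(Z)`. -/
noncomputable def grIdeal (K : Type*) [Field K] {σ : Type*} (Z : Set (σ → K)) :
    Ideal (MvPolynomial σ K) :=
  Ideal.span {g | ∃ f ∈ vanishingIdeal K Z, f ≠ 0 ∧
    g = MvPolynomial.homogeneousComponent f.totalDegree f}

section Aux

variable {I : Type*} {M : Set (I → SignType)}

/-- `x` lies in every flat of `M` containing `S`. -/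
def memCl (M : Set (I → SignType)) (S : Set I) (x : I) : Prop :=
  ∀ G ∈ flats M, S ⊆ G → x ∈ G

lemma memCl_mono {S T : Set I} (h : S ⊆ T) {x : I} (hx : memCl M S x) :
    memCl M T x := fun G hG hTG => hx G hG (h.trans hTG)

lemma memCl_self {S : Set I} {x : I} (hx : x ∈ S) : memCl M S x :=
  fun _G _ hS => hS hx

lemma memCl_trans {S T : Set I} (hT : ∀ t ∈ T, memCl M S t) {x : I}
    (hx : memCl M T x) : memCl M S x :=
  fun G hG hS => hx G hG (fun t ht => hT t ht G hG hS)

lemma signtype_cases : ∀ x y : SignType, x ≠ 0 → y ≠ x → y = 0 ∨ y = -x := by decide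

lemma signtype_neg_ne : ∀ x : SignType, x ≠ 0 → -x ≠ 0 := by decide

lemma signtype_negneg : ∀ x : SignType, -(-x) = x := by decide

lemma exchange (hM : IsCOM M) {X₀ : I → SignType} (hX₀ : X₀ ∈ M)
    {A : Set I} {b c : I} (hA : A ⊆ sflat X₀) (hb : b ∈ sflat X₀)
    (hc : c ∈ sflat X₀)
    (h1 : memCl M (A ∪ {c}) b) (h2 : ¬ memCl M A b) :
    memCl M (A ∪ {b}) c := by
  intro G hG hsub
  by_contra hcG
  obtain ⟨X, hXM, hXflat⟩ := hG
  subst hXflat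
  have hXb : X b = 0 := hsub (Or.inr rfl)
  have hXA : ∀ a ∈ A, X a = 0 := fun a ha => hsub (Or.inl ha)
  have hXc : X c ≠ 0 := hcG
  -- witness for b ∉ cl(A)
  simp only [memCl, not_forall] at h2
  obtain ⟨G', hG', hAG', hbG'⟩ := h2
  obtain ⟨Y, hYM, hYflat⟩ := hG'
  subst hYflat
  have hYb : Y b ≠ 0 := hbG'
  have hYA : ∀ a ∈ A, Y a = 0 := fun a ha => hAG' ha
  -- adjust Y so that its c-value is 0 or -(X c)
  obtain ⟨Y1, hY1M, hY1b, hY1A, hY1c⟩ :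
      ∃ Y1 ∈ M, Y1 b ≠ 0 ∧ (∀ a ∈ A, Y1 a = 0) ∧ (Y1 c = 0 ∨ Y1 c = -(X c)) := by
    by_cases hYc : Y c = X c
    · refine ⟨scomp X₀ (-Y), hM.faceSym X₀ hX₀ Y hYM, ?_, ?_, ?_⟩
      · have : X₀ b = 0 := hb
        simp [scomp, this, signtype_neg_ne _ hYb]
      · intro a ha
        have h0 : X₀ a = 0 := hA ha
        simp [scomp, h0, hYA a ha]
      · have h0 : X₀ c = 0 := hc
        right
        simp [scomp, h0, hYc]
    · exact ⟨Y, hYM, hYb, hYA, signtype_cases _ _ hXc hYc⟩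
  -- compose with -X to force the c-value to be -(X c)
  set Y2 := scomp Y1 (-X) with hY2def
  have hY2M : Y2 ∈ M := hM.faceSym Y1 hY1M X hXM
  have hY2c : Y2 c = -(X c) := by
    rcases hY1c with h | h
    · simp [hY2def, scomp, h]
    · simp [hY2def, scomp, h, signtype_neg_ne _ hXc]
  have hY2b : Y2 b = Y1 b := by simp [hY2def, scomp, hY1b]
  have hY2A : ∀ a ∈ A, Y2 a = 0 := by
    intro a ha
    simp [hY2def, scomp, hY1A a ha, hXA a ha]
  -- strong elimination at c
  have hcsep : c ∈ sepSet X Y2 := ⟨by rw [hY2c, signtype_negneg], hXc⟩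
  obtain ⟨Z, hZM, hZc, hZ⟩ := hM.strongElim X hXM Y2 hY2M c hcsep
  have hZA : ∀ a ∈ A, Z a = 0 := by
    intro a ha
    have hns : a ∉ sepSet X Y2 := fun hmem => hmem.2 (hXA a ha)
    rw [hZ a hns]
    simp [scomp, hXA a ha, hY2A a ha]
  have hZb : Z b ≠ 0 := by
    have hns : b ∉ sepSet X Y2 := fun hmem => hmem.2 hXb
    rw [hZ b hns]
    simpa [scomp, hXb, hY2b] using hY1b
  -- contradiction with b ∈ cl(A ∪ {c})
  apply hZb
  exact h1 (sflat Z) ⟨Z, hZM, rfl⟩ (by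
    rintro x (hx | rfl)
    · exact hZA x hx
    · exact hZc)

end Aux

section Stein
variable {I : Type*} [DecidableEq I] {M : Set (I → SignType)}

lemma steinitz (hM : IsCOM M) {X₀ : I → SignType} (hX₀ : X₀ ∈ M)
    (S : Finset I) (hSind : ∀ s ∈ S, ¬ memCl M ↑(S.erase s) s)
    (hSF : ↑S ⊆ sflat X₀) :
    ∀ n (T : Finset I), (S \ T).card ≤ n → ↑T ⊆ sflat X₀ →
      (∀ s ∈ S, memCl M ↑T s) → S.card ≤ T.card := by
  classical
  intro n
  induction n with
  | zero =>
    intro T hcard _ _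
    have : S ⊆ T := by
      rwa [Nat.le_zero, Finset.card_eq_zero, Finset.sdiff_eq_empty_iff_subset] at hcard
    exact Finset.card_le_card this
  | succ n ih =>
    intro T hcard hTF hspan
    by_cases hST : S ⊆ T
    · exact Finset.card_le_card hST
    obtain ⟨s, hsS, hsT⟩ := Finset.not_subset.mp hST
    set D := S ∩ T with hD
    have hsD : ¬ memCl M ↑D s := by
      intro h
      apply hSind s hsS
      refine memCl_mono ?_ h
      intro x hx
      simp only [hD, Finset.coe_inter, Set.mem_inter_iff, Finset.mem_coe] at hx
      have hxs : x ≠ s := by rintro rfl; exact hsT hx.2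
      exact Finset.mem_coe.mpr (Finset.mem_erase.mpr ⟨hxs, hx.1⟩)
    -- choose a minimal C with D ⊆ C ⊆ T and s ∈ cl(C)
    have hTP : T ∈ T.powerset.filter (fun C => D ⊆ C ∧ memCl M ↑C s) := by
      simp only [Finset.mem_filter, Finset.mem_powerset]
      exact ⟨le_refl T, Finset.inter_subset_right, hspan s hsS⟩
    obtain ⟨C, hCmem, hCmin⟩ :=
      Finset.exists_min_image (T.powerset.filter (fun C => D ⊆ C ∧ memCl M ↑C s))
        Finset.card ⟨T, hTP⟩
    simp only [Finset.mem_filter, Finset.mem_powerset] at hCmem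
    obtain ⟨hCT, hDC, hCcl⟩ := hCmem
    obtain ⟨t, htC, htD⟩ : ∃ t ∈ C, t ∉ D := by
      by_contra h
      push_neg at h
      exact hsD (memCl_mono (fun x hx => Finset.mem_coe.mpr (h x (Finset.mem_coe.mp hx))) hCcl)
    have htT : t ∈ T := hCT htC
    have htS : t ∉ S := fun h => htD (Finset.mem_inter.mpr ⟨h, htT⟩)
    have hnotCe : ¬ memCl M ↑(C.erase t) s := by
      intro h
      have hmem : C.erase t ∈ T.powerset.filter (fun C => D ⊆ C ∧ memCl M ↑C s) := by
        simp only [Finset.mem_filter, Finset.mem_powerset]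
        refine ⟨(Finset.erase_subset t C).trans hCT, ?_, h⟩
        intro x hx
        exact Finset.mem_erase.mpr ⟨fun hxt => htD (hxt ▸ hx), hDC hx⟩
      have := hCmin _ hmem
      have hlt : (C.erase t).card < C.card := Finset.card_erase_lt_of_mem htC
      omega
    -- apply exchange: s ∈ cl(C) = cl((C.erase t) ∪ {t}), s ∉ cl(C.erase t)
    have hCeq : (↑(C.erase t) : Set I) ∪ {t} = ↑C := by
      ext x
      simp only [Set.mem_union, Finset.coe_erase, Set.mem_diff, Set.mem_singleton_iff,
        Finset.mem_coe]
      constructor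
      · rintro (⟨hx, _⟩ | rfl)
        · exact hx
        · exact htC
      · intro hx
        by_cases hxt : x = t
        · exact Or.inr hxt
        · exact Or.inl ⟨hx, hxt⟩
    have hx := exchange hM hX₀ (A := ↑(C.erase t)) (b := s) (c := t)
      (fun x hxm => hTF (hCT (Finset.mem_of_mem_erase (Finset.mem_coe.mp hxm))))
      (hSF hsS) (hTF htT)
      (by rw [hCeq]; exact hCcl) hnotCe
    -- hx : memCl M (↑(C.erase t) ∪ {s}) t
    set T' := insert s (T.erase t) with hT'
    have hsTe : s ∉ T.erase t := fun h => hsT (Finset.mem_of_mem_erase h)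
    have hT'card : T'.card = T.card := by
      rw [hT', Finset.card_insert_of_notMem hsTe, Finset.card_erase_of_mem htT]
      have : 0 < T.card := Finset.card_pos.mpr ⟨t, htT⟩
      omega
    have hT'F : ↑T' ⊆ sflat X₀ := by
      intro x hx
      simp only [hT', Finset.coe_insert, Set.mem_insert_iff, Finset.mem_coe] at hx
      rcases hx with rfl | hx
      · exact hSF hsS
      · exact hTF (Finset.mem_of_mem_erase hx)
    have hTt' : memCl M ↑T' t := by
      refine memCl_mono ?_ hx
      rintro x (hxm | rfl)
      · have hxm' := Finset.mem_coe.mp hxm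
        exact Finset.mem_coe.mpr (Finset.mem_insert_of_mem
          (Finset.mem_erase.mpr ⟨(Finset.mem_erase.mp hxm').1, hCT (Finset.mem_of_mem_erase hxm')⟩))
      · exact Finset.mem_coe.mpr (Finset.mem_insert_self _ _)
    have hspan' : ∀ x ∈ S, memCl M ↑T' x := by
      intro x hxS
      refine memCl_trans ?_ (hspan x hxS)
      intro τ hτ
      have hτT := Finset.mem_coe.mp hτ
      by_cases hτt : τ = t
      · exact hτt ▸ hTt'
      · exact memCl_self (Finset.mem_coe.mpr
          (Finset.mem_insert_of_mem (Finset.mem_erase.mpr ⟨hτt, hτT⟩)))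
    have hcard' : (S \ T').card ≤ n := by
      have hsub : S \ T' ⊆ (S \ T).erase s := by
        intro x hxm
        obtain ⟨hxS, hxT'⟩ := Finset.mem_sdiff.mp hxm
        simp only [hT', Finset.mem_insert, Finset.mem_erase, not_or, not_and] at hxT'
        have hxt : x ≠ t := fun h => htS (h ▸ hxS)
        refine Finset.mem_erase.mpr ⟨hxT'.1, Finset.mem_sdiff.mpr ⟨hxS, fun hxT => ?_⟩⟩
        exact hxT'.2 hxt hxT
      have h1 : (S \ T').card ≤ ((S \ T).erase s).card := Finset.card_le_card hsub
      have h2 : ((S \ T).erase s).card < (S \ T).card :=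
        Finset.card_erase_lt_of_mem (Finset.mem_sdiff.mpr ⟨hsS, hsT⟩)
      omega
    calc S.card ≤ T'.card := ih T' hcard' hT'F hspan'
    _ = T.card := hT'card

lemma basic_card_eq (hM : IsCOM M) {B B' : Finset I} {F : Set I}
    (hB : IsBasic M B F) (hB' : IsBasic M B' F) : B.card = B'.card := by
  obtain ⟨X₀, hX₀M, hX₀F⟩ := hB.1.1
  have key : ∀ (C C' : Finset I), IsBasic M C F → IsBasic M C' F → C.card ≤ C'.card := by
    intro C C' hC hC'
    have hCF : ↑C ⊆ sflat X₀ := by rw [hX₀F]; exact hC.1.2.1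
    have hC'F : ↑C' ⊆ sflat X₀ := by rw [hX₀F]; exact hC'.1.2.1
    have hind : ∀ s ∈ C, ¬ memCl M ↑(C.erase s) s := by
      intro s hs hmem
      have hmin : minimalFlatOf M ↑(C.erase s) F := by
        refine ⟨hC.1.1, (Finset.coe_subset.mpr (Finset.erase_subset s C)).trans hC.1.2.1, ?_⟩
        intro G hG hsub
        have hsG : s ∈ G := hmem G hG hsub
        refine hC.1.2.2 G hG ?_
        intro x hx
        have hx' := Finset.mem_coe.mp hx
        rcases eq_or_ne x s with rfl | hxs
        · exact hsG
        · exact hsub (Finset.mem_coe.mpr (Finset.mem_erase.mpr ⟨hxs, hx'⟩))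
      have heq := hC.2 (C.erase s) (Finset.erase_subset s C) hmin
      exact absurd heq ((Finset.erase_ne_self).mpr hs)
    have hspan : ∀ s ∈ C, memCl M ↑C' s := by
      intro s hs G hG hsub
      exact hC'.1.2.2 G hG hsub (hC.1.2.1 (Finset.mem_coe.mpr hs))
    exact steinitz hM hX₀M C hind hCF (C \ C').card C' le_rfl hC'F hspan
  exact le_antisymm (key B B' hB hB') (key B' B hB' hB)

end Stein

/-- if `B` and `B'` are two basic sets for the same flat `F`,
then `∏_{b∈B} z_b − ∏_{b'∈B'} z_{b'}` lies in the vanishing ideal `I(Z_M)` of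
the big locus, and (being homogeneous, since `#B = #B'`) it also lies in
`gr I(Z_M)`. -/
theorem basic_difference_in_gr (K : Type*) [Field K] {I : Type*}
    {M : Set (I → SignType)} (hM : IsCOM M)
    (B B' : Finset I) (F : Set I)
    (hB : IsBasic M B F) (hB' : IsBasic M B' F) :
    ((∏ b ∈ B, MvPolynomial.X (b, (0 : SignType)))
        - (∏ b ∈ B', MvPolynomial.X (b, (0 : SignType)))
      ∈ vanishingIdeal K (bigLocus K M)) ∧
    ((∏ b ∈ B, MvPolynomial.X (b, (0 : SignType)))
        - (∏ b ∈ B', MvPolynomial.X (b, (0 : SignType)))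
      ∈ grIdeal K (bigLocus K M)) := by
  classical
  set f : MvPolynomial (I × SignType) K :=
    (∏ b ∈ B, MvPolynomial.X (b, (0 : SignType)))
      - (∏ b ∈ B', MvPolynomial.X (b, (0 : SignType))) with hf_def
  -- evaluation of the monomial at a big point
  have heval : ∀ (X : I → SignType) (C : Finset I),
      MvPolynomial.eval (bigPoint K X) (∏ b ∈ C, MvPolynomial.X (b, (0 : SignType)))
        = if ∀ b ∈ C, X b = 0 then (1 : K) else 0 := by
    intro X C
    rw [map_prod]
    by_cases h : ∀ b ∈ C, X b = 0
    · rw [if_pos h, Finset.prod_eq_one]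
      intro b hb
      simp [MvPolynomial.eval_X, bigPoint, h b hb]
    · rw [if_neg h]
      push_neg at h
      obtain ⟨b, hb, hb0⟩ := h
      exact Finset.prod_eq_zero hb (by simp [MvPolynomial.eval_X, bigPoint, hb0])
  -- the key combinatorial equivalence
  have hkey : ∀ X ∈ M, ((∀ b ∈ B, X b = 0) ↔ (∀ b ∈ B', X b = 0)) := by
    intro X hX
    have hXfl : sflat X ∈ flats M := ⟨X, hX, rfl⟩
    constructor
    · intro h b hb
      have hBsub : (B : Set I) ⊆ sflat X := fun x hx => h x (Finset.mem_coe.mp hx)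
      have hFsub : F ⊆ sflat X := hB.1.2.2 _ hXfl hBsub
      exact hFsub (hB'.1.2.1 (Finset.mem_coe.mpr hb))
    · intro h b hb
      have hBsub : (B' : Set I) ⊆ sflat X := fun x hx => h x (Finset.mem_coe.mp hx)
      have hFsub : F ⊆ sflat X := hB'.1.2.2 _ hXfl hBsub
      exact hFsub (hB.1.2.1 (Finset.mem_coe.mpr hb))
  have hvan : f ∈ vanishingIdeal K (bigLocus K M) := by
    rw [vanishingIdeal]
    simp only [Ideal.mem_iInf]
    rintro z ⟨X, hXM, rfl⟩
    rw [RingHom.mem_ker, hf_def, map_sub, heval, heval]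
    by_cases h : ∀ b ∈ B, X b = 0
    · rw [if_pos h, if_pos ((hkey X hXM).mp h), sub_self]
    · rw [if_neg h, if_neg (fun h' => h ((hkey X hXM).mpr h')), sub_self]
  refine ⟨hvan, ?_⟩
  by_cases hBB : B = B'
  · have : f = 0 := by rw [hf_def, hBB, sub_self]
    rw [this]
    exact Ideal.zero_mem _
  · -- f is nonzero and homogeneous of degree B.card
    have hcard : B.card = B'.card := basic_card_eq hM hB hB'
    have hne : f ≠ 0 := by
      obtain ⟨b₀, hb₀B, hb₀B'⟩ : ∃ b₀ ∈ B, b₀ ∉ B' := by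
        by_contra h
        push_neg at h
        exact hBB (Finset.eq_of_subset_of_card_le h (le_of_eq hcard.symm))
      intro h0
      set z : I × SignType → K := fun p => if p = (b₀, (0 : SignType)) then 0 else 1 with hz
      have := congrArg (MvPolynomial.eval z) h0
      rw [hf_def, map_sub, map_zero, map_prod, map_prod] at this
      simp only [MvPolynomial.eval_X] at this
      rw [Finset.prod_eq_zero hb₀B (by simp [hz]), Finset.prod_eq_one (fun b hb => by
        have : b ≠ b₀ := fun h => hb₀B' (h ▸ hb)
        simp [hz, Prod.ext_iff, this])] at this
      simp at this
    have hhom : ∀ (C : Finset I),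
        (∏ b ∈ C, MvPolynomial.X (R := K) (b, (0 : SignType))).IsHomogeneous C.card := by
      intro C
      have := MvPolynomial.IsHomogeneous.prod C
        (fun b => MvPolynomial.X (R := K) (b, (0 : SignType))) (fun _ => 1)
        (fun i _ => MvPolynomial.isHomogeneous_X _ _)
      simpa using this
    have hf : f.IsHomogeneous B.card := by
      refine (hhom B).sub ?_
      rw [hcard]
      exact hhom B'
    have hcomp : MvPolynomial.homogeneousComponent f.totalDegree f = f := by
      rw [hf.totalDegree hne,
        MvPolynomial.homogeneousComponent_of_mem
          ((MvPolynomial.mem_homogeneousSubmodule _ _).mpr hf)]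
      simp
    exact Ideal.subset_span ⟨f, hvan, hne, hcomp.symm⟩
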